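/- In the Closed-form SINR setting with fixed powers P_u, P_r > 0 (not depending on M), for every index k the function M ↦ SINR_k(M) tends to +∞ as M → ∞; consequently the spectral efficiency SE_k(M) = ((T−τ)/T)·((K−1)/K)·log₂(1 + SINR_k(M)) grows without bound as M → ∞. -/

import Mathlib

open Filter Finset

set_option maxHeartbeats 1600000

noncomputable section

/-- The closed-form normalization factor `α⁽¹⁾` of eq. (24) of the paper, as a function of
the number of relay antennas `M`, for estimated-channel variances `σ2` (i.e. `σ_k²`),
large-scale coefficients `β`, user power `Pu` and relay power `Pr`. -/
def alphaCF (K : ℕ) [NeZero K] (σ2 β : ZMod K → ℝ) (Pu Pr : ℝ) (M : ℕ) : ℝ :=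
  Pr / ((M : ℝ) ^ 3 * Pu * (∑ k' : ZMod K, σ2 (k' - 1) * (σ2 k') ^ 2)
    + (M : ℝ) ^ 2 * (∑ k' : ZMod K, σ2 k' * σ2 (k' + 1)) * (Pu * (∑ k' : ZMod K, β k') + 1)
    + (M : ℝ) * Pu * ∑ k' : ZMod K, (σ2 k') ^ 2 * σ2 (k' + 1))

/-- `a_{k,i} = σ_k⁴ σ_{k+1}² β_i + σ_i⁴ σ_{i-1}² β_k`. -/
def aCF (K : ℕ) [NeZero K] (σ2 β : ZMod K → ℝ) (k i : ZMod K) : ℝ :=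
  (σ2 k) ^ 2 * σ2 (k + 1) * β i + (σ2 i) ^ 2 * σ2 (i - 1) * β k

/-- `b_{k,i} = β_k β_i Σ_{k'} σ_{k'}² σ_{k'+1}²`. -/
def bCF (K : ℕ) [NeZero K] (σ2 β : ZMod K → ℝ) (k i : ZMod K) : ℝ :=
  β k * β i * ∑ k' : ZMod K, σ2 k' * σ2 (k' + 1)

/-- `c_{k,i} = σ_k⁴ σ_{k-1}² β_i + σ_i⁴ σ_{i+1}² β_k`. -/
def cCF (K : ℕ) [NeZero K] (σ2 β : ZMod K → ℝ) (k i : ZMod K) : ℝ :=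
  (σ2 k) ^ 2 * σ2 (k - 1) * β i + (σ2 i) ^ 2 * σ2 (i + 1) * β k

/-- `V_k(M) = M³ a_{k,k+1} + M² b_{k,k+1} + M c_{k,k+1}` (the beamforming uncertainty
variance of eq. (27)). -/
def Vcf (K : ℕ) [NeZero K] (σ2 β : ZMod K → ℝ) (k : ZMod K) (M : ℕ) : ℝ :=
  (M : ℝ) ^ 3 * aCF K σ2 β k (k + 1) + (M : ℝ) ^ 2 * bCF K σ2 β k (k + 1)
    + (M : ℝ) * cCF K σ2 β k (k + 1)

/-- The inter-user interference term `IU_k(M)` of eq. (28). -/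
def IUcf (K : ℕ) [NeZero K] (σ2 β : ZMod K → ℝ) (Pu Pr : ℝ) (k : ZMod K) (M : ℕ) : ℝ :=
  alphaCF K σ2 β Pu Pr M * Pu * (∑ i ∈ Finset.univ.erase (k + 1),
      ((M : ℝ) ^ 3 * aCF K σ2 β k i + (M : ℝ) ^ 2 * bCF K σ2 β k i + (M : ℝ) * cCF K σ2 β k i))
  + alphaCF K σ2 β Pu Pr M * Pu * (M : ℝ) ^ 2 * (σ2 (k - 1)) ^ 2 * (σ2 k) ^ 2
  + alphaCF K σ2 β Pu Pr M * Pu * (M : ℝ) *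
      (2 * (σ2 k) ^ 3 * σ2 (k + 1) + 2 * (σ2 k) ^ 3 * σ2 (k - 1)
        + (2 * (σ2 k) ^ 2 + (β k) ^ 2 - 2 * β k * σ2 k)
          * ∑ k' : ZMod K, 2 * σ2 k' * σ2 (k' + 1))

/-- The amplified-noise term `AN_k(M)` of eq. (29). -/
def ANcf (K : ℕ) [NeZero K] (σ2 β : ZMod K → ℝ) (Pu Pr : ℝ) (k : ZMod K) (M : ℕ) : ℝ :=
  alphaCF K σ2 β Pu Pr M * ((M : ℝ) ^ 3 * (σ2 k) ^ 2 * σ2 (k + 1)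
    + (M : ℝ) ^ 2 * β k * ∑ k' : ZMod K, σ2 k' * σ2 (k' + 1))

/-- The closed-form SINR of user `k` in the first time slot (Theorem 1 of the paper). -/
def sinrCF (K : ℕ) [NeZero K] (σ2 β : ZMod K → ℝ) (Pu Pr : ℝ) (k : ZMod K) (M : ℕ) : ℝ :=
  alphaCF K σ2 β Pu Pr M * Pu * (M : ℝ) ^ 4 * (σ2 k) ^ 2 * (σ2 (k + 1)) ^ 2
    / (alphaCF K σ2 β Pu Pr M * Pu * Vcf K σ2 β k M
        + IUcf K σ2 β Pu Pr k M + ANcf K σ2 β Pu Pr k M + 1)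

/-- with fixed powers, the closed-form SINR of each user tends to `+∞`
as `M → ∞`, and so does the spectral efficiency. -/
theorem sinr_and_se_unbounded
    (K : ℕ) [NeZero K] (hK : 2 ≤ K)
    (β : ZMod K → ℝ) (hβ : ∀ k, 0 < β k)
    (τ T Pp : ℝ) (hτ : (K : ℝ) ≤ τ) (hT : τ < T) (hPp : 0 < Pp)
    (σ2 : ZMod K → ℝ) (hσ2 : ∀ k, σ2 k = τ * Pp * (β k) ^ 2 / (τ * Pp * β k + 1))
    (Pu Pr : ℝ) (hPu : 0 < Pu) (hPr : 0 < Pr) (k : ZMod K) :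
    Tendsto (fun M : ℕ => sinrCF K σ2 β Pu Pr k M) atTop atTop ∧
    Tendsto (fun M : ℕ => (T - τ) / T * (((K : ℝ) - 1) / K)
        * Real.logb 2 (1 + sinrCF K σ2 β Pu Pr k M)) atTop atTop := by
  have hKpos : 0 < K := by omega
  have hK0 : (0:ℝ) < K := by exact_mod_cast hKpos
  have hK2 : (2:ℝ) ≤ K := by exact_mod_cast hK
  have hτ0 : 0 < τ := lt_of_lt_of_le hK0 hτ
  have hT0 : 0 < T := lt_trans hτ0 hT
  have hσ : ∀ j, 0 < σ2 j := by
    intro j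
    rw [hσ2 j]
    have hb := hβ j
    positivity
  haveI : Nonempty (ZMod K) := ⟨0⟩
  have hne : (Finset.univ : Finset (ZMod K)).Nonempty := Finset.univ_nonempty
  obtain ⟨S1, hS1⟩ : ∃ x : ℝ, x = ∑ k' : ZMod K, σ2 (k' - 1) * (σ2 k') ^ 2 := ⟨_, rfl⟩
  obtain ⟨S2, hS2⟩ : ∃ x : ℝ, x = ∑ k' : ZMod K, σ2 k' * σ2 (k' + 1) := ⟨_, rfl⟩
  obtain ⟨S3, hS3⟩ : ∃ x : ℝ, x = ∑ k' : ZMod K, (σ2 k') ^ 2 * σ2 (k' + 1) := ⟨_, rfl⟩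
  obtain ⟨SB, hSB⟩ : ∃ x : ℝ, x = ∑ k' : ZMod K, β k' := ⟨_, rfl⟩
  obtain ⟨E3, hE3⟩ : ∃ x : ℝ, x = ∑ i ∈ Finset.univ.erase (k + 1), aCF K σ2 β k i := ⟨_, rfl⟩
  obtain ⟨E2, hE2⟩ : ∃ x : ℝ, x = ∑ i ∈ Finset.univ.erase (k + 1), bCF K σ2 β k i := ⟨_, rfl⟩
  obtain ⟨E1, hE1⟩ : ∃ x : ℝ, x = ∑ i ∈ Finset.univ.erase (k + 1), cCF K σ2 β k i := ⟨_, rfl⟩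
  have hS1p : 0 < S1 := by
    rw [hS1]
    exact Finset.sum_pos (fun i _ => by have := hσ (i - 1); have := hσ i; positivity) hne
  have hS2p : 0 < S2 := by
    rw [hS2]
    exact Finset.sum_pos (fun i _ => by have := hσ i; have := hσ (i + 1); positivity) hne
  have hS3p : 0 < S3 := by
    rw [hS3]
    exact Finset.sum_pos (fun i _ => by have := hσ i; have := hσ (i + 1); positivity) hne
  have hSBp : 0 < SB := by
    rw [hSB]
    exact Finset.sum_pos (fun i _ => hβ i) hne
  have hak : ∀ i, 0 ≤ aCF K σ2 β k i := by
    intro i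
    simp only [aCF]
    have := hσ k; have := hσ (k + 1); have := hσ i; have := hσ (i - 1)
    have := hβ i; have := hβ k
    positivity
  have hbk' : ∀ i, 0 ≤ bCF K σ2 β k i := by
    intro i
    simp only [bCF]
    rw [← hS2]
    have := hβ i; have := hβ k
    positivity
  have hck : ∀ i, 0 ≤ cCF K σ2 β k i := by
    intro i
    simp only [cCF]
    have := hσ k; have := hσ (k - 1); have := hσ i; have := hσ (i + 1)
    have := hβ i; have := hβ k
    positivity
  have hE3n : 0 ≤ E3 := by rw [hE3]; exact Finset.sum_nonneg fun i _ => hak i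
  have hE2n : 0 ≤ E2 := by rw [hE2]; exact Finset.sum_nonneg fun i _ => hbk' i
  have hE1n : 0 ≤ E1 := by rw [hE1]; exact Finset.sum_nonneg fun i _ => hck i
  have hbr : 0 ≤ 2 * (σ2 k) ^ 2 + (β k) ^ 2 - 2 * β k * σ2 k := by
    nlinarith [sq_nonneg (σ2 k - β k), sq_nonneg (σ2 k)]
  have hsum2 : (∑ k' : ZMod K, 2 * σ2 k' * σ2 (k' + 1)) = 2 * S2 := by
    rw [hS2, Finset.mul_sum]
    exact Finset.sum_congr rfl fun i _ => by ring
  have ht1 : 0 ≤ 2 * (σ2 k) ^ 3 * σ2 (k + 1) + 2 * (σ2 k) ^ 3 * σ2 (k - 1)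
      + (2 * (σ2 k) ^ 2 + (β k) ^ 2 - 2 * β k * σ2 k) * (2 * S2) := by
    have h1 := hσ k; have h2 := hσ (k + 1); have h3 := hσ (k - 1)
    have hx : 0 ≤ (2 * (σ2 k) ^ 2 + (β k) ^ 2 - 2 * β k * σ2 k) * (2 * S2) :=
      mul_nonneg hbr (by positivity)
    have hy : 0 ≤ 2 * (σ2 k) ^ 3 * σ2 (k + 1) := by positivity
    have hz : 0 ≤ 2 * (σ2 k) ^ 3 * σ2 (k - 1) := by positivity
    linarith
  obtain ⟨c0, hc0⟩ : ∃ x : ℝ, x = Pr * Pu * (σ2 k) ^ 2 * (σ2 (k + 1)) ^ 2 := ⟨_, rfl⟩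
  obtain ⟨R3, hR3⟩ : ∃ x : ℝ, x = Pr * Pu * (aCF K σ2 β k (k + 1) + E3)
      + Pr * ((σ2 k) ^ 2 * σ2 (k + 1)) + Pu * S1 := ⟨_, rfl⟩
  obtain ⟨R2, hR2⟩ : ∃ x : ℝ, x = Pr * Pu * (bCF K σ2 β k (k + 1) + E2
      + (σ2 (k - 1)) ^ 2 * (σ2 k) ^ 2) + Pr * (β k * S2) + S2 * (Pu * SB + 1) := ⟨_, rfl⟩
  obtain ⟨R1, hR1⟩ : ∃ x : ℝ, x = Pr * Pu * (cCF K σ2 β k (k + 1) + E1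
      + (2 * (σ2 k) ^ 3 * σ2 (k + 1) + 2 * (σ2 k) ^ 3 * σ2 (k - 1)
        + (2 * (σ2 k) ^ 2 + (β k) ^ 2 - 2 * β k * σ2 k) * (2 * S2))) + Pu * S3 := ⟨_, rfl⟩
  have hc0p : 0 < c0 := by
    rw [hc0]; have := hσ k; have := hσ (k + 1); positivity
  have hR3p : 0 < R3 := by
    rw [hR3]
    have h1 : 0 ≤ Pr * Pu * (aCF K σ2 β k (k + 1) + E3) :=
      mul_nonneg (by positivity) (add_nonneg (hak _) hE3n)
    have h2 : 0 ≤ Pr * ((σ2 k) ^ 2 * σ2 (k + 1)) := by have := hσ (k + 1); positivity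
    have h3 : 0 < Pu * S1 := by positivity
    linarith
  have hR2n : 0 ≤ R2 := by
    rw [hR2]
    have h1 : 0 ≤ Pr * Pu * (bCF K σ2 β k (k + 1) + E2 + (σ2 (k - 1)) ^ 2 * (σ2 k) ^ 2) :=
      mul_nonneg (by positivity) (add_nonneg (add_nonneg (hbk' _) hE2n) (by positivity))
    have h2 : 0 ≤ Pr * (β k * S2) := by have := hβ k; positivity
    have h3 : 0 ≤ S2 * (Pu * SB + 1) := by positivity
    linarith
  have hR1n : 0 ≤ R1 := by
    rw [hR1]
    have h1 : 0 ≤ Pr * Pu * (cCF K σ2 β k (k + 1) + E1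
        + (2 * (σ2 k) ^ 3 * σ2 (k + 1) + 2 * (σ2 k) ^ 3 * σ2 (k - 1)
          + (2 * (σ2 k) ^ 2 + (β k) ^ 2 - 2 * β k * σ2 k) * (2 * S2))) :=
      mul_nonneg (by positivity) (add_nonneg (add_nonneg (hck _) hE1n) ht1)
    have h2 : 0 ≤ Pu * S3 := by positivity
    linarith
  have key : ∀ M : ℕ, 1 ≤ M →
      sinrCF K σ2 β Pu Pr k M
        = c0 * (M : ℝ) * (R3 + R2 * ((M : ℝ))⁻¹ + R1 * ((M : ℝ)⁻¹) ^ 2)⁻¹ := by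
    intro M hM
    have hM1 : (1:ℝ) ≤ (M : ℝ) := by exact_mod_cast hM
    have hM0 : (0:ℝ) < (M : ℝ) := by linarith
    have hMne : (M : ℝ) ≠ 0 := ne_of_gt hM0
    have hD : 0 < ((M : ℝ) ^ 3 * Pu * S1 + (M : ℝ) ^ 2 * S2 * (Pu * SB + 1)
        + (M : ℝ) * Pu * S3) := by positivity
    have hQ : 0 < R3 + R2 * ((M : ℝ))⁻¹ + R1 * ((M : ℝ)⁻¹) ^ 2 := by positivity
    have hα : 0 ≤ alphaCF K σ2 β Pu Pr M := by
      simp only [alphaCF]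
      rw [← hS1, ← hS2, ← hS3, ← hSB]
      exact le_of_lt (div_pos hPr hD)
    have hV : 0 ≤ Vcf K σ2 β k M := by
      simp only [Vcf]
      exact add_nonneg (add_nonneg (mul_nonneg (by positivity) (hak _))
        (mul_nonneg (by positivity) (hbk' _))) (mul_nonneg (by positivity) (hck _))
    have hIU : 0 ≤ IUcf K σ2 β Pu Pr k M := by
      simp only [IUcf]
      rw [hsum2]
      have hs : 0 ≤ ∑ i ∈ Finset.univ.erase (k + 1),
          ((M : ℝ) ^ 3 * aCF K σ2 β k i + (M : ℝ) ^ 2 * bCF K σ2 β k i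
            + (M : ℝ) * cCF K σ2 β k i) :=
        Finset.sum_nonneg fun i _ =>
          add_nonneg (add_nonneg (mul_nonneg (by positivity) (hak i))
            (mul_nonneg (by positivity) (hbk' i))) (mul_nonneg (by positivity) (hck i))
      have h1 : 0 ≤ alphaCF K σ2 β Pu Pr M * Pu * (∑ i ∈ Finset.univ.erase (k + 1),
          ((M : ℝ) ^ 3 * aCF K σ2 β k i + (M : ℝ) ^ 2 * bCF K σ2 β k i
            + (M : ℝ) * cCF K σ2 β k i)) :=
        mul_nonneg (mul_nonneg hα hPu.le) hs
      have h2 : 0 ≤ alphaCF K σ2 β Pu Pr M * Pu * (M : ℝ) ^ 2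
          * (σ2 (k - 1)) ^ 2 * (σ2 k) ^ 2 :=
        mul_nonneg (mul_nonneg (mul_nonneg (mul_nonneg hα hPu.le) (by positivity))
          (sq_nonneg _)) (sq_nonneg _)
      have h3 : 0 ≤ alphaCF K σ2 β Pu Pr M * Pu * (M : ℝ)
          * (2 * (σ2 k) ^ 3 * σ2 (k + 1) + 2 * (σ2 k) ^ 3 * σ2 (k - 1)
            + (2 * (σ2 k) ^ 2 + (β k) ^ 2 - 2 * β k * σ2 k) * (2 * S2)) :=
        mul_nonneg (mul_nonneg (mul_nonneg hα hPu.le) (by positivity)) ht1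
      linarith
    have hAN : 0 ≤ ANcf K σ2 β Pu Pr k M := by
      simp only [ANcf]
      rw [← hS2]
      refine mul_nonneg hα ?_
      have := hσ k; have := hσ (k + 1); have := hβ k
      positivity
    have hB : 0 < alphaCF K σ2 β Pu Pr M * Pu * Vcf K σ2 β k M
        + IUcf K σ2 β Pu Pr k M + ANcf K σ2 β Pu Pr k M + 1 := by
      have hVα : 0 ≤ alphaCF K σ2 β Pu Pr M * Pu * Vcf K σ2 β k M :=
        mul_nonneg (mul_nonneg hα hPu.le) hV
      linarith
    have hesum : (∑ i ∈ Finset.univ.erase (k + 1),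
        ((M : ℝ) ^ 3 * aCF K σ2 β k i + (M : ℝ) ^ 2 * bCF K σ2 β k i
          + (M : ℝ) * cCF K σ2 β k i))
        = (M : ℝ) ^ 3 * E3 + (M : ℝ) ^ 2 * E2 + (M : ℝ) * E1 := by
      rw [hE3, hE2, hE1, Finset.mul_sum, Finset.mul_sum, Finset.mul_sum,
        ← Finset.sum_add_distrib, ← Finset.sum_add_distrib]
    have hP2 : 0 < R3 * (M : ℝ) ^ 2 + R2 * (M : ℝ) + R1 := by positivity
    have hQeq : (R3 + R2 * ((M : ℝ))⁻¹ + R1 * ((M : ℝ)⁻¹) ^ 2)⁻¹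
        = (M : ℝ) ^ 2 / (R3 * (M : ℝ) ^ 2 + R2 * (M : ℝ) + R1) := by
      have hq : R3 + R2 * ((M : ℝ))⁻¹ + R1 * ((M : ℝ)⁻¹) ^ 2
          = (R3 * (M : ℝ) ^ 2 + R2 * (M : ℝ) + R1) / (M : ℝ) ^ 2 := by
        field_simp
      rw [hq, inv_div]
    simp only [sinrCF]
    rw [div_eq_iff (ne_of_gt hB), hQeq]
    simp only [IUcf, ANcf, Vcf, alphaCF]
    rw [hesum, hsum2, ← hS1, ← hS2, ← hS3, ← hSB]
    field_simp [hD.ne', hP2.ne']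
    rw [hc0, hR3, hR2, hR1]
    ring
  have h1 : Tendsto (fun M : ℕ => c0 * (M : ℝ)) atTop atTop :=
    tendsto_natCast_atTop_atTop.const_mul_atTop hc0p
  have hQt : Tendsto (fun M : ℕ => R3 + R2 * ((M : ℝ))⁻¹ + R1 * ((M : ℝ)⁻¹) ^ 2)
      atTop (nhds R3) := by
    have h0 : Tendsto (fun M : ℕ => ((M : ℝ))⁻¹) atTop (nhds 0) :=
      tendsto_inv_atTop_nhds_zero_nat
    have := ((tendsto_const_nhds (x := R3)).add
      ((tendsto_const_nhds (x := R2)).mul h0)).add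
      ((tendsto_const_nhds (x := R1)).mul (h0.pow 2))
    simpa using this
  have h2 : Tendsto (fun M : ℕ => (R3 + R2 * ((M : ℝ))⁻¹ + R1 * ((M : ℝ)⁻¹) ^ 2)⁻¹)
      atTop (nhds R3⁻¹) := hQt.inv₀ (ne_of_gt hR3p)
  have hprod : Tendsto (fun M : ℕ => c0 * (M : ℝ)
      * (R3 + R2 * ((M : ℝ))⁻¹ + R1 * ((M : ℝ)⁻¹) ^ 2)⁻¹) atTop atTop :=
    Tendsto.atTop_mul_pos (inv_pos.2 hR3p) h1 h2
  have hsinr : Tendsto (fun M : ℕ => sinrCF K σ2 β Pu Pr k M) atTop atTop := by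
    refine hprod.congr' ?_
    filter_upwards [eventually_ge_atTop 1] with M hM
    exact (key M hM).symm
  refine ⟨hsinr, ?_⟩
  have hconst : 0 < (T - τ) / T * (((K : ℝ) - 1) / K) :=
    mul_pos (div_pos (by linarith) hT0) (div_pos (by linarith) hK0)
  have hadd : Tendsto (fun M : ℕ => 1 + sinrCF K σ2 β Pu Pr k M) atTop atTop :=
    tendsto_atTop_add_const_left _ 1 hsinr
  have hlog : Tendsto (fun M : ℕ => Real.logb 2 (1 + sinrCF K σ2 β Pu Pr k M)) atTop atTop :=
    (Real.tendsto_logb_atTop one_lt_two).comp hadd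
  exact hlog.const_mul_atTop hconst
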